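/- Let N ∈ ℂ^{n×k}, let D_l ∈ ℂ^{n×n} and D_r ∈ ℂ^{k×k} be Hermitian positive definite with D_l − N·D_r·N^H positive definite, and let Δ ∈ ℂ^{k×n} satisfy ‖Δ‖ ≤ 1 and D_r^{1/2}·Δ = Δ·D_l^{1/2} (where D_l^{1/2}, D_r^{1/2} are the unique positive-definite square roots). Then I_n − N·Δ is invertible (and likewise I_k − Δ·N is invertible). -/

import Mathlib

open Matrix
open scoped ComplexOrder Matrix.Norms.L2Operator MatrixOrder

/-- Conjugating a positive definite matrix by an invertible matrix preserves positive
definiteness. -/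
lemma posDef_conj_of_isUnit {m : Type*} [Fintype m] [DecidableEq m]
    {A B : Matrix m m ℂ} (hA : A.PosDef) (hB : IsUnit B) : (Bᴴ * A * B).PosDef := by
  refine Matrix.PosDef.of_dotProduct_mulVec_pos (Matrix.isHermitian_conjTranspose_mul_mul B hA.1) fun x hx => ?_
  have hBx : B *ᵥ x ≠ 0 := by
    intro h
    exact hx <| (Matrix.mulVec_injective_iff_isUnit.mpr hB) (by simpa using h)
  have key := hA.dotProduct_mulVec_pos hBx
  calc (0 : ℂ) < star (B *ᵥ x) ⬝ᵥ (A *ᵥ (B *ᵥ x)) := key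
    _ = star x ⬝ᵥ ((Bᴴ * A * B) *ᵥ x) := by
        rw [Matrix.star_mulVec, ← Matrix.dotProduct_mulVec, Matrix.mulVec_mulVec,
          Matrix.mulVec_mulVec, Matrix.mul_assoc]

/-- D-scaled small-gain theorem: if `D_l`, `D_r` are Hermitian positive definite with
`D_l − N·D_r·N^H` positive definite, and `Δ` satisfies `‖Δ‖ ≤ 1` (spectral norm) together with
the scaling-commutation property `D_r^{1/2}·Δ = Δ·D_l^{1/2}`, then `I − N·Δ` and `I − Δ·N`
are invertible. -/
theorem scaled_small_gain
    (n k : ℕ) (N : Matrix (Fin n) (Fin k) ℂ)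
    (Dl : Matrix (Fin n) (Fin n) ℂ) (Dr : Matrix (Fin k) (Fin k) ℂ)
    (hDl : Dl.PosDef) (hDr : Dr.PosDef)
    (hperf : (Dl - N * Dr * Nᴴ).PosDef)
    (Δ : Matrix (Fin k) (Fin n) ℂ)
    (hΔ : ‖Δ‖ ≤ 1)
    (hcomm : CFC.sqrt Dr * Δ = Δ * CFC.sqrt Dl) :
    IsUnit (1 - N * Δ) ∧ IsUnit (1 - Δ * N) := by
  classical
  set T := CFC.sqrt Dl with hTdef
  set R := CFC.sqrt Dr with hRdef
  have hT : T.PosSemidef := (CFC.sqrt_nonneg Dl).posSemidef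
  have hR : R.PosSemidef := (CFC.sqrt_nonneg Dr).posSemidef
  have hTT : T * T = Dl := CFC.sqrt_mul_sqrt_self Dl hDl.posSemidef.nonneg
  have hRR : R * R = Dr := CFC.sqrt_mul_sqrt_self Dr hDr.posSemidef.nonneg
  have hTdet : IsUnit T.det := by
    rw [isUnit_iff_ne_zero]
    refine left_ne_zero_of_mul (b := T.det) ?_
    rw [← Matrix.det_mul, hTT]
    exact hDl.det_pos.ne'
  have hTunit : IsUnit T := (Matrix.isUnit_iff_isUnit_det T).mpr hTdet
  have eTinvH : (T⁻¹)ᴴ = T⁻¹ := by rw [Matrix.conjTranspose_nonsing_inv, hT.1]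
  set M : Matrix (Fin n) (Fin k) ℂ := T⁻¹ * N * R with hMdef
  -- the scaled small-gain condition
  have hkey : (1 - M * Mᴴ).PosDef := by
    have e2 : M * Mᴴ = T⁻¹ * (N * Dr * Nᴴ) * T⁻¹ := by
      rw [← hRR]
      simp only [hMdef, Matrix.conjTranspose_mul, eTinvH, Matrix.mul_assoc]
      rw [(hR.1 : Rᴴ = R)]
    have e1 : (1 : Matrix (Fin n) (Fin n) ℂ) - M * Mᴴ
        = (T⁻¹)ᴴ * (Dl - N * Dr * Nᴴ) * T⁻¹ := by
      rw [eTinvH, Matrix.mul_sub, Matrix.sub_mul, ← e2]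
      congr 1
      rw [← hTT]
      simp only [Matrix.mul_assoc]
      rw [Matrix.mul_nonsing_inv T hTdet, Matrix.mul_one, Matrix.nonsing_inv_mul T hTdet]
    rw [e1]
    exact posDef_conj_of_isUnit hperf ((Matrix.isUnit_nonsing_inv_iff).mpr hTunit)
  -- core: `1 - M * Δ` is invertible
  have hcore : IsUnit (1 - M * Δ) := by
    rw [Matrix.isUnit_iff_isUnit_det, isUnit_iff_ne_zero]
    intro hdet
    obtain ⟨v, hv0, hveq⟩ := (Matrix.exists_mulVec_eq_zero_iff).mpr hdet
    rw [Matrix.sub_mulVec, Matrix.one_mulVec, sub_eq_zero, ← Matrix.mulVec_mulVec] at hveq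
    -- hveq : v = M *ᵥ (Δ *ᵥ v)
    set w : Fin k → ℂ := Δ *ᵥ v with hwdef
    set ev : EuclideanSpace ℂ (Fin n) := (WithLp.equiv 2 _).symm v with hevdef
    set ew : EuclideanSpace ℂ (Fin k) := (WithLp.equiv 2 _).symm w with hewdef
    set eu : EuclideanSpace ℂ (Fin k) := (WithLp.equiv 2 _).symm (Mᴴ *ᵥ v) with heudef
    have hev0 : ev ≠ 0 := by
      intro h
      exact hv0 (by simpa [hevdef] using congrArg (WithLp.equiv 2 (Fin n → ℂ)) h)
    have hevpos : 0 < ‖ev‖ := norm_pos_iff.mpr hev0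
    -- ‖Mᴴ v‖ < ‖v‖
    have hMv : ‖eu‖ < ‖ev‖ := by
      have h0 := hkey.dotProduct_mulVec_pos hv0
      have e3 : star v ⬝ᵥ ((1 - M * Mᴴ) *ᵥ v)
          = ((‖ev‖ ^ 2 - ‖eu‖ ^ 2 : ℝ) : ℂ) := by
        have evv : star v ⬝ᵥ v = ((‖ev‖ ^ 2 : ℝ) : ℂ) := by
          have := inner_self_eq_norm_sq_to_K (𝕜 := ℂ) ev
          rw [EuclideanSpace.inner_eq_star_dotProduct, dotProduct_comm] at this
          simpa [hevdef] using this
        have euu : star v ⬝ᵥ ((M * Mᴴ) *ᵥ v) = ((‖eu‖ ^ 2 : ℝ) : ℂ) := by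
          have h := inner_self_eq_norm_sq_to_K (𝕜 := ℂ) eu
          rw [EuclideanSpace.inner_eq_star_dotProduct, dotProduct_comm] at h
          simp only [heudef, WithLp.equiv_symm_apply, WithLp.ofLp_toLp] at h
          rw [Matrix.star_mulVec, Matrix.conjTranspose_conjTranspose] at h
          rw [← Matrix.mulVec_mulVec, Matrix.dotProduct_mulVec, h]
          push_cast
          rfl
        rw [Matrix.sub_mulVec, Matrix.one_mulVec, dotProduct_sub, evv, euu]
        push_cast
        ring
      rw [e3] at h0
      have := Complex.zero_lt_real.mp h0
      have hsq : ‖eu‖ ^ 2 < ‖ev‖ ^ 2 := by linarith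
      exact lt_of_pow_lt_pow_left₀ 2 (norm_nonneg ev) hsq
    -- ‖Δ v‖ ≤ ‖v‖
    have hw : ‖ew‖ ≤ ‖ev‖ := by
      have h1 := Δ.l2_opNorm_mulVec ev
      have h2 : ‖Δ‖ * ‖ev‖ ≤ 1 * ‖ev‖ :=
        mul_le_mul_of_nonneg_right hΔ (norm_nonneg ev)
      calc ‖ew‖ = ‖(EuclideanSpace.equiv (Fin k) ℂ).symm (Δ *ᵥ ev)‖ := rfl
        _ ≤ ‖Δ‖ * ‖ev‖ := h1
        _ ≤ 1 * ‖ev‖ := h2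
        _ = ‖ev‖ := one_mul _
    -- ‖v‖² = ⟪Mᴴv, Δv⟫ ≤ ‖Mᴴv‖‖Δv‖ < ‖v‖²
    have hinner : (inner ℂ eu ew : ℂ) = ((‖ev‖ ^ 2 : ℝ) : ℂ) := by
      have evv : star v ⬝ᵥ v = ((‖ev‖ ^ 2 : ℝ) : ℂ) := by
        have := inner_self_eq_norm_sq_to_K (𝕜 := ℂ) ev
        rw [EuclideanSpace.inner_eq_star_dotProduct, dotProduct_comm] at this
        simpa [hevdef] using this
      rw [EuclideanSpace.inner_eq_star_dotProduct, dotProduct_comm]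
      simp only [heudef, hewdef, WithLp.equiv_symm_apply, WithLp.ofLp_toLp]
      rw [Matrix.star_mulVec, Matrix.conjTranspose_conjTranspose, ← Matrix.dotProduct_mulVec,
        ← hveq, evv]
    have hCS : ‖(inner ℂ eu ew : ℂ)‖ ≤ ‖eu‖ * ‖ew‖ := norm_inner_le_norm eu ew
    rw [hinner] at hCS
    have hCS' : ‖ev‖ ^ 2 ≤ ‖eu‖ * ‖ew‖ := by
      rwa [Complex.norm_real, Real.norm_of_nonneg (by positivity)] at hCS
    have hlt : ‖eu‖ * ‖ew‖ < ‖ev‖ ^ 2 := by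
      calc ‖eu‖ * ‖ew‖ ≤ ‖eu‖ * ‖ev‖ :=
            mul_le_mul_of_nonneg_left hw (norm_nonneg eu)
        _ < ‖ev‖ * ‖ev‖ := mul_lt_mul_of_pos_right hMv hevpos
        _ = ‖ev‖ ^ 2 := (sq ‖ev‖).symm
    exact absurd hCS' (not_le.mpr hlt)
  -- unscale
  have e4 : R * (Δ * T⁻¹) = Δ := by
    rw [← Matrix.mul_assoc, hcomm, Matrix.mul_assoc, Matrix.mul_nonsing_inv T hTdet,
      Matrix.mul_one]
  have e3 : (1 : Matrix (Fin n) (Fin n) ℂ) - N * Δ = T * (1 - M * Δ) * T⁻¹ := by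
    rw [Matrix.mul_sub, Matrix.sub_mul, Matrix.mul_one, Matrix.mul_nonsing_inv T hTdet]
    congr 1
    simp only [hMdef, Matrix.mul_assoc]
    rw [e4, ← Matrix.mul_assoc, Matrix.mul_nonsing_inv T hTdet, Matrix.one_mul]
  have hNΔ : IsUnit (1 - N * Δ) := by
    rw [e3]
    exact (hTunit.mul hcore).mul ((Matrix.isUnit_nonsing_inv_iff).mpr hTunit)
  refine ⟨hNΔ, ?_⟩
  rw [Matrix.isUnit_iff_isUnit_det]
  have edet : (1 - Δ * N).det = (1 - N * Δ).det := by
    have h1 : (1 : Matrix (Fin k) (Fin k) ℂ) - Δ * N = 1 + Δ * (-N) := by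
      rw [Matrix.mul_neg, ← sub_eq_add_neg]
    have h2 : (1 : Matrix (Fin n) (Fin n) ℂ) - N * Δ = 1 + (-N) * Δ := by
      rw [Matrix.neg_mul, ← sub_eq_add_neg]
    rw [h1, h2, Matrix.det_one_add_mul_comm]
  rw [edet, ← Matrix.isUnit_iff_isUnit_det]
  exact hNΔ
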